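/- Let A be a sequential vset-automaton with state set Q and transition relation δ that is semi-functional for a set Y ⊆ Vars(A), and let x ∈ Vars(A)∖Y. Then there exists a sequential vset-automaton A′ that is equivalent to A (i.e., ⟦A′⟧(d) = ⟦A⟧(d) for every document d), is semi-functional for Y ∪ {x}, and has at most 2|Q| states and at most 2|δ| transitions. -/

import Mathlib

namespace Spanners

open scoped Classical

/-! ### Spans and mappings -/

abbrev Span := ℕ × ℕ

abbrev VMapping := ℕ → Option Span

def emptyMapping : VMapping := fun _ => none

def mapDom (μ : VMapping) : Set ℕ := {x | μ x ≠ none}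

/-- Two mappings are compatible if they agree on every common variable. -/
def Compatible (μ1 μ2 : VMapping) : Prop :=
  ∀ x s1 s2, μ1 x = some s1 → μ2 x = some s2 → s1 = s2

def DisjointDom (μ1 μ2 : VMapping) : Prop :=
  ∀ x, μ1 x = none ∨ μ2 x = none

def munion (μ1 μ2 : VMapping) : VMapping := fun x =>
  match μ1 x with
  | some s => some s
  | none => μ2 x

def minsert (x : ℕ) (s : Span) (μ : VMapping) : VMapping :=
  fun y => if y = x then some s else μ y

/-- Natural join of two sets of mappings. -/
def joinSet (S1 S2 : Set VMapping) : Set VMapping :=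
  {μ | ∃ μ1 ∈ S1, ∃ μ2 ∈ S2, Compatible μ1 μ2 ∧ μ = munion μ1 μ2}

/-- Difference of two sets of mappings. -/
def diffSet (S1 S2 : Set VMapping) : Set VMapping :=
  {μ1 | μ1 ∈ S1 ∧ ∀ μ2 ∈ S2, ¬ Compatible μ1 μ2}

/-- Restriction of a mapping to a set of variables. -/
noncomputable def restrictMap (μ : VMapping) (V : Set ℕ) : VMapping :=
  fun x => if x ∈ V then μ x else none

/-- Projection of a set of mappings to a set of variables. -/
def projSet (V : Set ℕ) (S : Set VMapping) : Set VMapping :=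
  {μ' | ∃ μ ∈ S, μ' = restrictMap μ V}

/-! ### Regex formulas -/

inductive RGX (Sig : Type) where
  | empty : RGX Sig
  | eps : RGX Sig
  | letter : Sig → RGX Sig
  | union : RGX Sig → RGX Sig → RGX Sig
  | concat : RGX Sig → RGX Sig → RGX Sig
  | star : RGX Sig → RGX Sig
  | bind : ℕ → RGX Sig → RGX Sig

variable {Sig : Type}

def RGX.vars : RGX Sig → Finset ℕ
  | .empty => ∅
  | .eps => ∅
  | .letter _ => ∅
  | .union a b => a.vars ∪ b.vars
  | .concat a b => a.vars ∪ b.vars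
  | .star a => a.vars
  | .bind x a => insert x a.vars

def RGX.size : RGX Sig → ℕ
  | .empty => 1
  | .eps => 1
  | .letter _ => 1
  | .union a b => a.size + b.size + 1
  | .concat a b => a.size + b.size + 1
  | .star a => a.size + 1
  | .bind _ a => a.size + 1

/-- The schemaless semantics `⟨α⟩(d)`: `RMatch α d i j μ` means `([i,j⟩, μ) ∈ ⟨α⟩(d)`. -/
inductive RMatch : RGX Sig → List Sig → ℕ → ℕ → VMapping → Prop where
  | eps {d : List Sig} {i : ℕ} (h1 : 1 ≤ i) (h2 : i ≤ d.length + 1) :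
      RMatch .eps d i i emptyMapping
  | letter {d : List Sig} {i : ℕ} {σ : Sig} (h1 : 1 ≤ i) (h2 : d[i - 1]? = some σ) :
      RMatch (.letter σ) d i (i + 1) emptyMapping
  | unionL {a b : RGX Sig} {d : List Sig} {i j : ℕ} {μ : VMapping}
      (h : RMatch a d i j μ) : RMatch (.union a b) d i j μ
  | unionR {a b : RGX Sig} {d : List Sig} {i j : ℕ} {μ : VMapping}
      (h : RMatch b d i j μ) : RMatch (.union a b) d i j μ
  | concat {a b : RGX Sig} {d : List Sig} {i k j : ℕ} {μ1 μ2 : VMapping}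
      (h1 : RMatch a d i k μ1) (h2 : RMatch b d k j μ2) (hd : DisjointDom μ1 μ2) :
      RMatch (.concat a b) d i j (munion μ1 μ2)
  | bind {x : ℕ} {a : RGX Sig} {d : List Sig} {i j : ℕ} {μ : VMapping}
      (h : RMatch a d i j μ) (hx : μ x = none) :
      RMatch (.bind x a) d i j (minsert x (i, j) μ)
  | starNil {a : RGX Sig} {d : List Sig} {i : ℕ} (h1 : 1 ≤ i) (h2 : i ≤ d.length + 1) :
      RMatch (.star a) d i i emptyMapping
  | starCons {a : RGX Sig} {d : List Sig} {i k j : ℕ} {μ1 μ2 : VMapping}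
      (h1 : RMatch a d i k μ1) (h2 : RMatch (.star a) d k j μ2) (hd : DisjointDom μ1 μ2) :
      RMatch (.star a) d i j (munion μ1 μ2)

/-- `⟦α⟧(d)`: mappings extracted with the full span. -/
def rgxSem (α : RGX Sig) (d : List Sig) : Set VMapping :=
  {μ | RMatch α d 1 (d.length + 1) μ}

/-- Sequential regex formulas. -/
def RGX.Sequential : RGX Sig → Prop
  | .empty => True
  | .eps => True
  | .letter _ => True
  | .union a b => a.Sequential ∧ b.Sequential
  | .concat a b => a.Sequential ∧ b.Sequential ∧ Disjoint a.vars b.vars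
  | .star a => a.Sequential ∧ a.vars = ∅
  | .bind x a => a.Sequential ∧ x ∉ a.vars

/-- Variable-free words over the alphabet (built from ε, letters and concatenation). -/
inductive RGX.IsWord : RGX Sig → Prop where
  | eps : RGX.IsWord .eps
  | letter (σ : Sig) : RGX.IsWord (.letter σ)
  | concat {a b : RGX Sig} : a.IsWord → b.IsWord → RGX.IsWord (.concat a b)

/-- Functional for a set `V` of variables. -/
inductive FunctionalFor : RGX Sig → Finset ℕ → Prop where
  | word {α : RGX Sig} (h : α.IsWord) : FunctionalFor α ∅
  | union {a b : RGX Sig} {V : Finset ℕ} (ha : FunctionalFor a V) (hb : FunctionalFor b V) :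
      FunctionalFor (.union a b) V
  | concat {a b : RGX Sig} {V : Finset ℕ} (V1 : Finset ℕ) (hsub : V1 ⊆ V)
      (ha : FunctionalFor a V1) (hb : FunctionalFor b (V \ V1)) :
      FunctionalFor (.concat a b) V
  | star {a : RGX Sig} (h : FunctionalFor a ∅) : FunctionalFor (.star a) ∅
  | bind {x : ℕ} {a : RGX Sig} {V : Finset ℕ} (h : FunctionalFor a (V.erase x)) :
      FunctionalFor (.bind x a) V

def RGX.Functional (α : RGX Sig) : Prop := FunctionalFor α α.vars

/-- Disjunctive functional regex formulas: finite disjunctions of functional regex formulas. -/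
inductive DisjFunctional : RGX Sig → Prop where
  | base {γ : RGX Sig} (h : γ.Functional) : DisjFunctional γ
  | union {a b : RGX Sig} (ha : DisjFunctional a) (hb : DisjFunctional b) :
      DisjFunctional (.union a b)

/-- Number of disjuncts of a (disjunctive) regex formula. -/
def countDisjuncts : RGX Sig → ℕ
  | .union a b => countDisjuncts a + countDisjuncts b
  | _ => 1

/-- Disjunction-free regex formulas. -/
def RGX.DisjFree : RGX Sig → Prop
  | .union _ _ => False
  | .concat a b => a.DisjFree ∧ b.DisjFree
  | .star a => a.DisjFree
  | .bind _ a => a.DisjFree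
  | _ => True

/-- `γ` is synchronized for `x`: no subformula `γ1 ∨ γ2` contains `x`. -/
def RGX.SyncFor : RGX Sig → ℕ → Prop
  | .union a b, x => (x ∉ a.vars ∧ x ∉ b.vars) ∧ a.SyncFor x ∧ b.SyncFor x
  | .concat a b, x => a.SyncFor x ∧ b.SyncFor x
  | .star a, x => a.SyncFor x
  | .bind _ a, x => a.SyncFor x
  | _, _ => True

/-- Concatenation of a list of regex formulas. -/
def concatList : List (RGX Sig) → RGX Sig
  | [] => .eps
  | [α] => α
  | α :: rest => .concat α (concatList rest)

/-- Disjunction of a list of regex formulas. -/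
def disjList : List (RGX Sig) → RGX Sig
  | [] => .empty
  | [α] => α
  | α :: rest => .union α (disjList rest)

/-! ### vset-automata -/

inductive VLabel (Sig : Type) where
  | eps : VLabel Sig
  | letter : Sig → VLabel Sig
  | openv : ℕ → VLabel Sig
  | closev : ℕ → VLabel Sig
deriving DecidableEq

structure VA (Sig : Type) [DecidableEq Sig] where
  q0 : ℕ
  F : Finset ℕ
  δ : Finset (ℕ × VLabel Sig × ℕ)

variable [DecidableEq Sig]

/-- The states of a VA: the initial state and all states mentioned in `F` or in transitions. -/
def statesOf (A : VA Sig) : Finset ℕ :=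
  insert A.q0 (A.F ∪ A.δ.image (fun t => t.1) ∪ A.δ.image (fun t => t.2.2))

def labelVars : VLabel Sig → Finset ℕ
  | .openv x => {x}
  | .closev x => {x}
  | _ => ∅

/-- `Vars(A)`: the variables mentioned in the transitions of `A`. -/
def varsOf (A : VA Sig) : Finset ℕ := A.δ.biUnion (fun t => labelVars t.2.1)

/-- Total size of a VA: number of states plus number of transitions. -/
def vaSize (A : VA Sig) : ℕ := (statesOf A).card + A.δ.card

/-- `A.PathFrom p ls q`: a path (run segment) from `p` to `q` with label sequence `ls`. -/
inductive VA.PathFrom (A : VA Sig) : ℕ → List (VLabel Sig) → ℕ → Prop where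
  | nil (q : ℕ) : VA.PathFrom A q [] q
  | cons {p q r : ℕ} {l : VLabel Sig} {ls : List (VLabel Sig)}
      (h : (p, l, q) ∈ A.δ) (htail : VA.PathFrom A q ls r) : VA.PathFrom A p (l :: ls) r

/-- The word (document) read by a sequence of labels. -/
def readWord : List (VLabel Sig) → List Sig :=
  List.filterMap fun l => match l with
    | VLabel.letter σ => some σ
    | _ => none

def isLetterL : VLabel Sig → Bool
  | .letter _ => true
  | _ => false

/-- The current position in the document just before executing the `k`-th label. -/
def posAt (ls : List (VLabel Sig)) (k : ℕ) : ℕ := 1 + (ls.take k).countP isLetterL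

/-- Validity of a run, given by its label sequence. -/
def ValidLabels (ls : List (VLabel Sig)) : Prop :=
  ∀ x : ℕ,
    ls.count (VLabel.openv x) ≤ 1 ∧
    ls.count (VLabel.closev x) ≤ 1 ∧
    ((VLabel.openv x) ∈ ls ↔ (VLabel.closev x) ∈ ls) ∧
    ∀ i j : ℕ, ls[i]? = some (VLabel.openv x) → ls[j]? = some (VLabel.closev x) →
      posAt ls i ≤ posAt ls j

/-- The mapping `μ_ρ` extracted from a (valid accepting) run with label sequence `ls`. -/
def runMapping (ls : List (VLabel Sig)) : VMapping := fun x =>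
  if (VLabel.openv x) ∈ ls then
    some (posAt ls (ls.idxOf (VLabel.openv x)), posAt ls (ls.idxOf (VLabel.closev x)))
  else none

/-- `ls` is the label sequence of an accepting run of `A`. -/
def AcceptsWith (A : VA Sig) (ls : List (VLabel Sig)) : Prop :=
  ∃ qf, VA.PathFrom A A.q0 ls qf ∧ qf ∈ A.F

/-- `⟦A⟧(d)`. -/
def vaSem (A : VA Sig) (d : List Sig) : Set VMapping :=
  {μ | ∃ ls, AcceptsWith A ls ∧ readWord ls = d ∧ ValidLabels ls ∧ μ = runMapping ls}

/-- A VA is sequential if all of its accepting runs are valid. -/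
def VA.Sequential (A : VA Sig) : Prop := ∀ ls, AcceptsWith A ls → ValidLabels ls

/-- A run from the initial state to `q` that is a prefix of an accepting run. -/
def PrefixRun (A : VA Sig) (ls : List (VLabel Sig)) (q : ℕ) : Prop :=
  VA.PathFrom A A.q0 ls q ∧ ∃ ls' qf, VA.PathFrom A q ls' qf ∧ qf ∈ A.F

/-- `A` is semi-functional for the variable `x`: no state has extended configuration `d`. -/
def SemiFunctionalFor (A : VA Sig) (x : ℕ) : Prop :=
  ¬ ∃ q ls1 ls2, PrefixRun A ls1 q ∧ PrefixRun A ls2 q ∧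
      (VLabel.closev x) ∈ ls1 ∧ (VLabel.openv x) ∉ ls2

def SemiFunctionalForSet (A : VA Sig) (X : Finset ℕ) : Prop :=
  ∀ x ∈ X, SemiFunctionalFor A x

/-- Functional VA: sequential, and every accepting run opens and closes every variable. -/
def FunctionalVA (A : VA Sig) : Prop :=
  A.Sequential ∧ ∀ ls, AcceptsWith A ls → ∀ x ∈ varsOf A,
    (VLabel.openv x) ∈ ls ∧ (VLabel.closev x) ∈ ls

/-- `l` has a unique target state in `A`. -/
def UniqueTarget (A : VA Sig) (l : VLabel Sig) : Prop :=
  ∃ qt : ℕ, ∀ p q : ℕ, (p, l, q) ∈ A.δ → q = qt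

/-- `A` is synchronized for the variable `x`. -/
def SyncForVA (A : VA Sig) (x : ℕ) : Prop :=
  UniqueTarget A (VLabel.openv x) ∧ UniqueTarget A (VLabel.closev x) ∧
    ((∀ ls, AcceptsWith A ls → (VLabel.openv x) ∈ ls ∧ (VLabel.closev x) ∈ ls) ∨
     (∀ ls, AcceptsWith A ls → (VLabel.openv x) ∉ ls ∧ (VLabel.closev x) ∉ ls))

/-- `A` is the disjunctive functional VA with functional components `parts`. -/
def DisjFunctionalVAWith (A : VA Sig) (parts : List (VA Sig)) : Prop :=
  (∀ B ∈ parts, FunctionalVA B) ∧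
  (parts.Pairwise fun B C => Disjoint (statesOf B) (statesOf C)) ∧
  (∀ B ∈ parts, A.q0 ∉ statesOf B) ∧
  A.F = parts.foldr (fun B s => B.F ∪ s) (∅ : Finset ℕ) ∧
  A.δ = (parts.map (fun B => (A.q0, (VLabel.eps : VLabel Sig), B.q0))).toFinset
        ∪ parts.foldr (fun B s => B.δ ∪ s) (∅ : Finset (ℕ × VLabel Sig × ℕ))

def DisjFunctionalVA (A : VA Sig) : Prop := ∃ parts, DisjFunctionalVAWith A parts

/-! ### 3CNF formulas -/

/-- A 3CNF clause over `n` Boolean variables: a triple of literals; `(i, true)` is `xᵢ`,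
`(i, false)` is `¬xᵢ`. -/
def Clause3 (n : ℕ) : Type := (Fin n × Bool) × (Fin n × Bool) × (Fin n × Bool)

def litsOf {n : ℕ} (c : Clause3 n) : List (Fin n × Bool) := [c.1, c.2.1, c.2.2]

def clauseSat {n : ℕ} (τ : Fin n → Bool) (c : Clause3 n) : Prop :=
  ∃ l ∈ litsOf c, τ l.1 = l.2

def Sat3 {n m : ℕ} (φ : Fin m → Clause3 n) : Prop :=
  ∃ τ : Fin n → Bool, ∀ j, clauseSat τ (φ j)

end Spanners

namespace Spanners

variable {Sig : Type} [DecidableEq Sig]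


/-! ### Auxiliary material for `statement2` -/

section Aux

set_option linter.unusedSectionVars false

variable {Sig : Type} [DecidableEq Sig]

/-! #### Generic list helpers -/

section ListHelpers

variable {α β γ : Type*}

lemma mem_of_getElem?' {l : List α} {a : α} {i : ℕ} (h : l[i]? = some a) : a ∈ l := by
  obtain ⟨h1, h2⟩ := List.getElem?_eq_some_iff.mp h
  exact h2 ▸ List.getElem_mem h1

lemma exists_getElem?_of_mem {l : List α} {a : α} (h : a ∈ l) : ∃ i : ℕ, l[i]? = some a := by
  obtain ⟨n, hn, he⟩ := List.mem_iff_getElem.mp h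
  exact ⟨n, by rw [List.getElem?_eq_getElem hn, he]⟩

variable [DecidableEq α]

lemma count_le_one_of_unique {l : List α} {a : α}
    (h : ∀ i j : ℕ, l[i]? = some a → l[j]? = some a → i = j) : l.count a ≤ 1 := by
  induction l with
  | nil => simp
  | cons b t ih =>
    rw [List.count_cons]
    by_cases hb : b = a
    · have ht : t.count a = 0 := by
        rw [List.count_eq_zero]
        intro hmem
        obtain ⟨k, hk⟩ := exists_getElem?_of_mem hmem
        have := h (k+1) 0 (by simpa using hk) (by simp [hb])
        omega
      simp [hb, ht]
    · have hbeq : (b == a) = false := by simpa using hb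
      rw [hbeq]
      simp only [Bool.false_eq_true, if_false, add_zero]
      exact ih fun (i j : ℕ) hi hj => by
        have := h (i+1) (j+1) (by simpa using hi) (by simpa using hj); omega

lemma two_le_count_of_two {l : List α} {a : α} {i j : ℕ} (hij : i ≠ j)
    (hi : l[i]? = some a) (hj : l[j]? = some a) : 2 ≤ l.count a := by
  induction l generalizing i j with
  | nil => simp at hi
  | cons b t ih =>
    match i, j with
    | 0, 0 => omega
    | 0, j+1 =>
      have hb : b = a := by simpa using hi
      have hmem : a ∈ t := mem_of_getElem?' (by simpa using hj)
      have hpos := List.count_pos_iff.mpr hmem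
      rw [List.count_cons]
      simp only [hb, beq_self_eq_true, if_true]
      omega
    | i+1, 0 =>
      have hb : b = a := by simpa using hj
      have hmem : a ∈ t := mem_of_getElem?' (by simpa using hi)
      have hpos := List.count_pos_iff.mpr hmem
      rw [List.count_cons]
      simp only [hb, beq_self_eq_true, if_true]
      omega
    | i+1, j+1 =>
      have := ih (by omega : i ≠ j) (by simpa using hi) (by simpa using hj)
      rw [List.count_cons]; omega

lemma count_eq_one_of {l : List α} {a : α} {i : ℕ} (hi : l[i]? = some a)
    (h : ∀ j : ℕ, l[j]? = some a → j = i) : l.count a = 1 := by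
  have h1 : l.count a ≤ 1 := count_le_one_of_unique fun (i' j' : ℕ) hi' hj' => by
    rw [h i' hi', h j' hj']
  have h2 : 0 < l.count a := List.count_pos_iff.mpr (mem_of_getElem?' hi)
  omega

lemma unique_of_count_le_one {l : List α} {a : α} (h : l.count a ≤ 1) {i j : ℕ}
    (hi : l[i]? = some a) (hj : l[j]? = some a) : i = j := by
  by_contra hij
  have := two_le_count_of_two hij hi hj
  omega

lemma exists_unique_of_count_one {l : List α} {a : α} (h : l.count a = 1) :
    ∃ i : ℕ, l[i]? = some a ∧ ∀ j : ℕ, l[j]? = some a → j = i := by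
  have hm : a ∈ l := List.count_pos_iff.mp (by omega)
  obtain ⟨i, hi⟩ := exists_getElem?_of_mem hm
  exact ⟨i, hi, fun j hj => unique_of_count_le_one (by omega) hj hi⟩

lemma indexOf_eq_of {l : List α} {a : α} {i : ℕ} (hi : l[i]? = some a)
    (hmin : ∀ j < i, l[j]? ≠ some a) : l.idxOf a = i := by
  induction l generalizing i with
  | nil => simp at hi
  | cons b t ih =>
    match i with
    | 0 =>
      have hb : b = a := by simpa using hi
      simp [List.idxOf_cons, hb]
    | i+1 =>
      have hb : ¬ (b = a) := fun hba => hmin 0 (by omega) (by simp [hba])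
      rw [List.idxOf_cons]
      have : (b == a) = false := by simpa using hb
      rw [this]
      simp only [cond_false]
      have := ih (by simpa using hi) (fun j hj => by
        have := hmin (j+1) (by omega); simpa using this)
      omega

lemma countP_rel {R : α → β → Prop} {p : α → Bool} {q : β → Bool} {l₁ : List α} {l₂ : List β}
    (h : List.Forall₂ R l₁ l₂) (hpq : ∀ a b, R a b → p a = q b) :
    l₁.countP p = l₂.countP q := by
  induction h with
  | nil => simp
  | cons hab _ ih => simp [List.countP_cons, hpq _ _ hab, ih]

lemma filterMap_rel {R : α → β → Prop} {f : α → Option γ} {g : β → Option γ}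
    {l₁ : List α} {l₂ : List β}
    (h : List.Forall₂ R l₁ l₂) (hfg : ∀ a b, R a b → f a = g b) :
    l₁.filterMap f = l₂.filterMap g := by
  induction h with
  | nil => simp
  | cons hab _ ih => simp only [List.filterMap_cons, hfg _ _ hab, ih]

lemma rel_getElem? {R : α → β → Prop} {l₁ : List α} {l₂ : List β}
    (h : List.Forall₂ R l₁ l₂) (i : ℕ) :
    (l₁[i]? = none ∧ l₂[i]? = none) ∨ ∃ a b, R a b ∧ l₁[i]? = some a ∧ l₂[i]? = some b := by
  induction h generalizing i with
  | nil => simp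
  | cons hab htail ih =>
    match i with
    | 0 => exact Or.inr ⟨_, _, hab, by simp, by simp⟩
    | i+1 => simpa using ih i

lemma forall₂_append {R : α → β → Prop} {l₁ l₁' : List α} {l₂ l₂' : List β}
    (h : List.Forall₂ R l₁ l₂) (h' : List.Forall₂ R l₁' l₂') :
    List.Forall₂ R (l₁ ++ l₁') (l₂ ++ l₂') := by
  induction h with
  | nil => simpa
  | cons hab _ ih => exact List.Forall₂.cons hab ih

end ListHelpers

/-! #### Labels and the relation `RelX` -/

def xlab (x : ℕ) (l : VLabel Sig) : Prop :=
  l = VLabel.openv x ∨ l = VLabel.closev x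

def RelX (x : ℕ) (l₁ l₂ : List (VLabel Sig)) : Prop :=
  List.Forall₂ (fun a b => a = b ∨ (xlab x a ∧ xlab x b)) l₁ l₂

lemma RelX.refl (x : ℕ) (l : List (VLabel Sig)) : RelX x l l :=
  List.forall₂_same.mpr fun a _ => Or.inl rfl

lemma RelX.length {x : ℕ} {l₁ l₂ : List (VLabel Sig)} (h : RelX x l₁ l₂) :
    l₁.length = l₂.length := List.Forall₂.length_eq h

lemma relx_readWord {x : ℕ} {l₁ l₂ : List (VLabel Sig)} (h : RelX x l₁ l₂) :
    readWord l₁ = readWord l₂ := by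
  refine filterMap_rel h ?_
  rintro a b (rfl | ⟨ha, hb⟩)
  · rfl
  · rcases ha with rfl | rfl <;> rcases hb with rfl | rfl <;> rfl

lemma relx_posAt {x : ℕ} {l₁ l₂ : List (VLabel Sig)} (h : RelX x l₁ l₂) (k : ℕ) :
    posAt l₁ k = posAt l₂ k := by
  unfold posAt
  congr 1
  refine countP_rel (List.forall₂_take k h) ?_
  rintro a b (rfl | ⟨ha, hb⟩)
  · rfl
  · rcases ha with rfl | rfl <;> rcases hb with rfl | rfl <;> rfl

lemma relx_count_ne {x y : ℕ} (hxy : y ≠ x) {l₁ l₂ : List (VLabel Sig)} (h : RelX x l₁ l₂) :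
    (l₁.count (VLabel.openv y) = l₂.count (VLabel.openv y)) ∧
    (l₁.count (VLabel.closev y) = l₂.count (VLabel.closev y)) := by
  constructor <;>
  · rw [List.count_eq_countP, List.count_eq_countP]
    refine countP_rel h ?_
    rintro a b (rfl | ⟨ha, hb⟩)
    · rfl
    · have hxy' : x ≠ y := Ne.symm hxy
      rcases ha with rfl | rfl <;> rcases hb with rfl | rfl <;> simp [hxy, hxy']

lemma relx_getElem?_ne {x y : ℕ} (hxy : y ≠ x) {l₁ l₂ : List (VLabel Sig)}
    (h : RelX x l₁ l₂) (i : ℕ) :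
    (l₁[i]? = some (VLabel.openv y) ↔ l₂[i]? = some (VLabel.openv y)) ∧
    (l₁[i]? = some (VLabel.closev y) ↔ l₂[i]? = some (VLabel.closev y)) := by
  rcases rel_getElem? h i with ⟨h1, h2⟩ | ⟨a, b, hab, h1, h2⟩
  · simp [h1, h2]
  · rw [h1, h2]
    rcases hab with rfl | ⟨ha, hb⟩
    · simp
    · have hxy' : x ≠ y := Ne.symm hxy
      have ha' : a ≠ VLabel.openv y ∧ a ≠ VLabel.closev y := by
        rcases ha with rfl | rfl <;> simp [hxy']
      have hb' : b ≠ VLabel.openv y ∧ b ≠ VLabel.closev y := by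
        rcases hb with rfl | rfl <;> simp [hxy']
      constructor <;> constructor <;> intro hh <;> simp_all

lemma relx_mem_ne {x y : ℕ} (hxy : y ≠ x) {l₁ l₂ : List (VLabel Sig)} (h : RelX x l₁ l₂) :
    ((VLabel.openv y) ∈ l₁ ↔ (VLabel.openv y) ∈ l₂) ∧
    ((VLabel.closev y) ∈ l₁ ↔ (VLabel.closev y) ∈ l₂) := by
  obtain ⟨h1, h2⟩ := relx_count_ne hxy h
  constructor <;> rw [← List.count_pos_iff, ← List.count_pos_iff] <;> omega

lemma countX_eq (x : ℕ) (l : List (VLabel Sig)) :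
    l.countP (fun a => a == VLabel.openv x || a == VLabel.closev x)
      = l.count (VLabel.openv x) + l.count (VLabel.closev x) := by
  induction l with
  | nil => simp
  | cons b t ih =>
    rw [List.countP_cons, List.count_cons, List.count_cons, ih]
    by_cases h1 : b = VLabel.openv x
    · simp [h1]; omega
    · by_cases h2 : b = VLabel.closev x
      · simp [h1, h2]; omega
      · simp [h1, h2]

lemma relx_countX {x : ℕ} {l₁ l₂ : List (VLabel Sig)} (h : RelX x l₁ l₂) :
    l₁.count (VLabel.openv x) + l₁.count (VLabel.closev x)
      = l₂.count (VLabel.openv x) + l₂.count (VLabel.closev x) := by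
  rw [← countX_eq, ← countX_eq]
  refine countP_rel h ?_
  rintro a b (rfl | ⟨ha, hb⟩)
  · rfl
  · rcases ha with rfl | rfl <;> rcases hb with rfl | rfl <;> simp

lemma posAt_mono (ls : List (VLabel Sig)) {i j : ℕ} (h : i ≤ j) :
    posAt ls i ≤ posAt ls j := by
  unfold posAt
  have : ls.take i = (ls.take j).take i := by
    rw [List.take_take, min_eq_left h]
  rw [this]
  exact Nat.add_le_add_left ((List.take_sublist i (ls.take j)).countP_le) 1

/-! #### Normal form for `x`-labels, validity transfer, mapping transfer -/

lemma indexOf_congr {α : Type*} [DecidableEq α] {l₁ l₂ : List α} {a : α}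
    (hlen : l₁.length = l₂.length)
    (h : ∀ i : ℕ, l₁[i]? = some a ↔ l₂[i]? = some a) :
    l₁.idxOf a = l₂.idxOf a := by
  induction l₁ generalizing l₂ with
  | nil =>
    cases l₂ with
    | nil => rfl
    | cons c s => simp at hlen
  | cons b t ih =>
    cases l₂ with
    | nil => simp at hlen
    | cons c s =>
      have h0 : b = a ↔ c = a := by
        have := h 0
        simpa using this
      by_cases hb : b = a
      · have hc : c = a := h0.mp hb
        simp [List.idxOf_cons, hb, hc]
      · have hc : ¬ c = a := fun hc => hb (h0.mpr hc)
        have hbeq : (b == a) = false := by simpa using hb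
        have hceq : (c == a) = false := by simpa using hc
        rw [List.idxOf_cons, List.idxOf_cons, hbeq, hceq]
        simp only [cond_false]
        have := ih (l₂ := s) (by simpa using hlen) (fun i => by simpa using h (i+1))
        omega

def XNorm (x : ℕ) (ls : List (VLabel Sig)) : Prop :=
  (∀ i : ℕ, ls[i]? ≠ some (VLabel.openv x) ∧ ls[i]? ≠ some (VLabel.closev x)) ∨
  (∃ i j : ℕ, i < j ∧ ls[i]? = some (VLabel.openv x) ∧ ls[j]? = some (VLabel.closev x) ∧
    ∀ k : ℕ, k ≠ i → k ≠ j → ls[k]? ≠ some (VLabel.openv x) ∧ ls[k]? ≠ some (VLabel.closev x))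

lemma valid_counts {ls : List (VLabel Sig)} (h : ValidLabels ls) (x : ℕ) :
    (ls.count (VLabel.openv x) = 0 ∧ ls.count (VLabel.closev x) = 0) ∨
    (ls.count (VLabel.openv x) = 1 ∧ ls.count (VLabel.closev x) = 1) := by
  obtain ⟨h1, h2, h3, _⟩ := h x
  by_cases hm : VLabel.openv x ∈ ls
  · right
    have hp1 := List.count_pos_iff.mpr hm
    have hp2 := List.count_pos_iff.mpr (h3.mp hm)
    omega
  · left
    have hmc : VLabel.closev x ∉ ls := fun hc => hm (h3.mpr hc)
    exact ⟨List.count_eq_zero.mpr hm, List.count_eq_zero.mpr hmc⟩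

lemma valid_transfer {x : ℕ} {ls₀ ls : List (VLabel Sig)} (hrel : RelX x ls₀ ls)
    (hv : ValidLabels ls₀) (hX : XNorm x ls) : ValidLabels ls := by
  intro y
  by_cases hxy : y = x
  · subst hxy
    rcases hX with hnone | ⟨i, j, hij, hi, hj, huniq⟩
    · have ho : VLabel.openv y ∉ ls := fun hm => by
        obtain ⟨k, hk⟩ := exists_getElem?_of_mem hm
        exact (hnone k).1 hk
      have hc : VLabel.closev y ∉ ls := fun hm => by
        obtain ⟨k, hk⟩ := exists_getElem?_of_mem hm
        exact (hnone k).2 hk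
      refine ⟨by simp [List.count_eq_zero.mpr ho], by simp [List.count_eq_zero.mpr hc],
        by simp [ho, hc], ?_⟩
      intro i' j' hi' _
      exact absurd hi' (hnone i').1
    · have hiu : ∀ k : ℕ, ls[k]? = some (VLabel.openv y) → k = i := by
        intro k hk
        by_contra hki
        rcases eq_or_ne k j with rfl | hkj
        · rw [hj] at hk; simp at hk
        · exact (huniq k hki hkj).1 hk
      have hju : ∀ k : ℕ, ls[k]? = some (VLabel.closev y) → k = j := by
        intro k hk
        by_contra hkj
        rcases eq_or_ne k i with rfl | hki
        · rw [hi] at hk; simp at hk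
        · exact (huniq k hki hkj).2 hk
      refine ⟨le_of_eq (count_eq_one_of hi hiu), le_of_eq (count_eq_one_of hj hju),
        ⟨fun _ => mem_of_getElem?' hj, fun _ => mem_of_getElem?' hi⟩, ?_⟩
      intro i' j' hi' hj'
      rw [hiu i' hi', hju j' hj']
      exact posAt_mono ls (le_of_lt hij)
  · obtain ⟨h1, h2, h3, h4⟩ := hv y
    obtain ⟨hc1, hc2⟩ := relx_count_ne hxy hrel
    obtain ⟨hm1, hm2⟩ := relx_mem_ne hxy hrel
    refine ⟨by omega, by omega, by rw [← hm1, ← hm2]; exact h3, ?_⟩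
    intro i j hi hj
    have hi₀ : ls₀[i]? = some (VLabel.openv y) := ((relx_getElem?_ne hxy hrel i).1).mpr hi
    have hj₀ : ls₀[j]? = some (VLabel.closev y) := ((relx_getElem?_ne hxy hrel j).2).mpr hj
    have hord := h4 i j hi₀ hj₀
    rwa [relx_posAt hrel i, relx_posAt hrel j] at hord

lemma runMapping_rel {x : ℕ} {ls₀ ls : List (VLabel Sig)} (hrel : RelX x ls₀ ls)
    (hv₀ : ValidLabels ls₀) (hv : ValidLabels ls) : runMapping ls₀ = runMapping ls := by
  funext y
  unfold runMapping
  by_cases hxy : y = x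
  · subst hxy
    rcases valid_counts hv₀ y with ⟨ho₀, hc₀⟩ | ⟨ho₀, hc₀⟩
    · have hcc := relx_countX hrel
      have ho : ls.count (VLabel.openv y) = 0 := by omega
      have hm₀ : VLabel.openv y ∉ ls₀ := List.count_eq_zero.mp ho₀
      have hm : VLabel.openv y ∉ ls := List.count_eq_zero.mp ho
      simp [hm₀, hm]
    · have hcc := relx_countX hrel
      obtain ⟨hvo, hvc, _, _⟩ := hv y
      have ho : ls.count (VLabel.openv y) = 1 := by omega
      have hc : ls.count (VLabel.closev y) = 1 := by omega
      obtain ⟨a₀, ha₀, hua₀⟩ := exists_unique_of_count_one ho₀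
      obtain ⟨b₀, hb₀, hub₀⟩ := exists_unique_of_count_one hc₀
      obtain ⟨a, ha, hua⟩ := exists_unique_of_count_one ho
      obtain ⟨b, hb, hub⟩ := exists_unique_of_count_one hc
      have hm₀ : VLabel.openv y ∈ ls₀ := mem_of_getElem?' ha₀
      have hm : VLabel.openv y ∈ ls := mem_of_getElem?' ha
      have hidxo₀ : ls₀.idxOf (VLabel.openv y) = a₀ :=
        indexOf_eq_of ha₀ (fun j hj hcon => by have := hua₀ j hcon; omega)
      have hidxc₀ : ls₀.idxOf (VLabel.closev y) = b₀ :=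
        indexOf_eq_of hb₀ (fun j hj hcon => by have := hub₀ j hcon; omega)
      have hidxo : ls.idxOf (VLabel.openv y) = a :=
        indexOf_eq_of ha (fun j hj hcon => by have := hua j hcon; omega)
      have hidxc : ls.idxOf (VLabel.closev y) = b :=
        indexOf_eq_of hb (fun j hj hcon => by have := hub j hcon; omega)
      have hab : a ≠ b := by
        intro hh; rw [hh, hb] at ha; simp at ha
      have hxa : a = a₀ ∨ a = b₀ := by
        rcases rel_getElem? hrel a with ⟨_, h2⟩ | ⟨u, v, huv, h1, h2⟩
        · rw [ha] at h2; simp at h2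
        · rw [ha] at h2
          have hv' : v = VLabel.openv y := by injection h2 with hh; exact hh.symm
          have hu : u = VLabel.openv y ∨ u = VLabel.closev y := by
            rcases huv with rfl | ⟨hxu, _⟩
            · left; exact hv'
            · exact hxu
          rcases hu with rfl | rfl
          · exact Or.inl (hua₀ a h1)
          · exact Or.inr (hub₀ a h1)
      have hxb : b = a₀ ∨ b = b₀ := by
        rcases rel_getElem? hrel b with ⟨_, h2⟩ | ⟨u, v, huv, h1, h2⟩
        · rw [hb] at h2; simp at h2
        · rw [hb] at h2
          have hv' : v = VLabel.closev y := by injection h2 with hh; exact hh.symm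
          have hu : u = VLabel.openv y ∨ u = VLabel.closev y := by
            rcases huv with rfl | ⟨hxu, _⟩
            · right; exact hv'
            · exact hxu
          rcases hu with rfl | rfl
          · exact Or.inl (hua₀ b h1)
          · exact Or.inr (hub₀ b h1)
      rw [if_pos hm₀, if_pos hm, hidxo₀, hidxc₀, hidxo, hidxc]
      rcases hxa with rfl | h1
      · have hbb : b = b₀ := by
          rcases hxb with h | h
          · exact absurd h.symm hab
          · exact h
        rw [hbb, relx_posAt hrel a, relx_posAt hrel b₀]
      · -- a = b₀, so b = a₀ : orientation swapped
        have hbb : b = a₀ := by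
          rcases hxb with h | h
          · exact h
          · exfalso; rw [h, ← h1] at hab; exact hab rfl
        subst h1; subst hbb
        have hord : posAt ls a ≤ posAt ls b := (hv y).2.2.2 a b ha hb
        have hord₀ : posAt ls₀ b ≤ posAt ls₀ a := (hv₀ y).2.2.2 b a ha₀ hb₀
        rw [relx_posAt hrel a, relx_posAt hrel b] at hord₀
        have heq : posAt ls a = posAt ls b := le_antisymm hord hord₀
        rw [relx_posAt hrel a, relx_posAt hrel b, heq]
  · obtain ⟨hm1, hm2⟩ := relx_mem_ne hxy hrel
    by_cases hm : VLabel.openv y ∈ ls₀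
    · have hm' : VLabel.openv y ∈ ls := hm1.mp hm
      rw [if_pos hm, if_pos hm']
      have hio : ls₀.idxOf (VLabel.openv y) = ls.idxOf (VLabel.openv y) :=
        indexOf_congr hrel.length (fun i => (relx_getElem?_ne hxy hrel i).1)
      have hic : ls₀.idxOf (VLabel.closev y) = ls.idxOf (VLabel.closev y) :=
        indexOf_congr hrel.length (fun i => (relx_getElem?_ne hxy hrel i).2)
      rw [hio, hic, relx_posAt hrel, relx_posAt hrel]
    · have hm' : VLabel.openv y ∉ ls := fun h => hm (hm1.mpr h)
      rw [if_neg hm, if_neg hm']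


/-! #### The doubled automaton -/

def liftT (x N : ℕ) (t : ℕ × VLabel Sig × ℕ) : Finset (ℕ × VLabel Sig × ℕ) :=
  if t.2.1 = VLabel.openv x ∨ t.2.1 = VLabel.closev x then
    {(t.1, VLabel.openv x, t.2.2 + N), (t.1 + N, VLabel.closev x, t.2.2 + N)}
  else
    {t, (t.1 + N, t.2.1, t.2.2 + N)}

def VA2 (A : VA Sig) (x N : ℕ) : VA Sig :=
  ⟨A.q0, A.F ∪ A.F.image (· + N), A.δ.biUnion (liftT x N)⟩

lemma mem_statesOf_q0 (A : VA Sig) : A.q0 ∈ statesOf A := by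
  unfold statesOf; exact Finset.mem_insert_self _ _

lemma mem_statesOf_F {A : VA Sig} {q : ℕ} (h : q ∈ A.F) : q ∈ statesOf A := by
  unfold statesOf
  exact Finset.mem_insert_of_mem (Finset.mem_union_left _ (Finset.mem_union_left _ h))

lemma mem_statesOf_src {A : VA Sig} {p : ℕ} {l : VLabel Sig} {q : ℕ}
    (h : (p, l, q) ∈ A.δ) : p ∈ statesOf A := by
  unfold statesOf
  exact Finset.mem_insert_of_mem (Finset.mem_union_left _
    (Finset.mem_union_right _ (Finset.mem_image.mpr ⟨(p, l, q), h, rfl⟩)))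

lemma mem_statesOf_tgt {A : VA Sig} {p : ℕ} {l : VLabel Sig} {q : ℕ}
    (h : (p, l, q) ∈ A.δ) : q ∈ statesOf A := by
  unfold statesOf
  exact Finset.mem_insert_of_mem (Finset.mem_union_right _
    (Finset.mem_image.mpr ⟨(p, l, q), h, rfl⟩))

lemma delta2_nonx {A : VA Sig} {x N : ℕ} {p : ℕ} {l : VLabel Sig} {q : ℕ}
    (h : (p, l, q) ∈ A.δ) (hl : ¬ xlab x l) :
    (p, l, q) ∈ (VA2 A x N).δ ∧ (p + N, l, q + N) ∈ (VA2 A x N).δ := by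
  have hlift : liftT x N (p, l, q) = {(p, l, q), (p + N, l, q + N)} :=
    if_neg (by simpa [xlab] using hl)
  constructor <;> exact Finset.mem_biUnion.mpr ⟨(p, l, q), h, by simp [hlift]⟩

lemma delta2_x {A : VA Sig} {x N : ℕ} {p : ℕ} {l : VLabel Sig} {q : ℕ}
    (h : (p, l, q) ∈ A.δ) (hl : xlab x l) :
    (p, VLabel.openv x, q + N) ∈ (VA2 A x N).δ ∧
    (p + N, VLabel.closev x, q + N) ∈ (VA2 A x N).δ := by
  have hlift : liftT x N (p, l, q)
      = {(p, VLabel.openv x, q + N), (p + N, VLabel.closev x, q + N)} :=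
    if_pos (by simpa [xlab] using hl)
  constructor <;> exact Finset.mem_biUnion.mpr ⟨(p, l, q), h, by simp [hlift]⟩

lemma delta2_inv {A : VA Sig} {x N : ℕ} {t : ℕ × VLabel Sig × ℕ}
    (h : t ∈ (VA2 A x N).δ) :
    ∃ p l q, (p, l, q) ∈ A.δ ∧
      ((¬ xlab x l ∧ (t = (p, l, q) ∨ t = (p + N, l, q + N))) ∨
       (xlab x l ∧ (t = (p, VLabel.openv x, q + N) ∨ t = (p + N, VLabel.closev x, q + N)))) := by
  obtain ⟨⟨p, l, q⟩, hu, ht⟩ := Finset.mem_biUnion.mp h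
  refine ⟨p, l, q, hu, ?_⟩
  by_cases hl : xlab x l
  · right
    refine ⟨hl, ?_⟩
    have hlift : liftT x N (p, l, q)
        = {(p, VLabel.openv x, q + N), (p + N, VLabel.closev x, q + N)} :=
      if_pos (by simpa [xlab] using hl)
    rw [hlift] at ht
    simpa using ht
  · left
    refine ⟨hl, ?_⟩
    have hlift : liftT x N (p, l, q) = {(p, l, q), (p + N, l, q + N)} :=
      if_neg (by simpa [xlab] using hl)
    rw [hlift] at ht
    simpa using ht

lemma pathFrom_append {A : VA Sig} {p m r : ℕ} {l1 l2 : List (VLabel Sig)}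
    (h1 : VA.PathFrom A p l1 m) (h2 : VA.PathFrom A m l2 r) :
    VA.PathFrom A p (l1 ++ l2) r := by
  induction h1 with
  | nil => simpa
  | cons h _ ih => exact VA.PathFrom.cons h (ih h2)

lemma pathFrom_split {A : VA Sig} {l1 : List (VLabel Sig)} :
    ∀ {p r : ℕ} {l2 : List (VLabel Sig)}, VA.PathFrom A p (l1 ++ l2) r →
      ∃ m, VA.PathFrom A p l1 m ∧ VA.PathFrom A m l2 r := by
  induction l1 with
  | nil => exact fun h => ⟨_, VA.PathFrom.nil _, h⟩
  | cons a t ih =>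
    intro p r l2 h
    cases h with
    | cons htr htail =>
      obtain ⟨m, hm1, hm2⟩ := ih htail
      exact ⟨m, VA.PathFrom.cons htr hm1, hm2⟩

lemma lift0 {A : VA Sig} {x N : ℕ} {p q : ℕ} {ls : List (VLabel Sig)}
    (h : VA.PathFrom A p ls q) (hls : ∀ l ∈ ls, ¬ xlab x l) :
    VA.PathFrom (VA2 A x N) p ls q := by
  induction h with
  | nil => exact VA.PathFrom.nil _
  | cons htr _ ih =>
    exact VA.PathFrom.cons (delta2_nonx htr (hls _ (List.mem_cons_self))).1
      (ih fun l hl => hls l (List.mem_cons_of_mem _ hl))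

lemma lift1 {A : VA Sig} {x N : ℕ} {p q : ℕ} {ls : List (VLabel Sig)}
    (h : VA.PathFrom A p ls q) (hls : ∀ l ∈ ls, ¬ xlab x l) :
    VA.PathFrom (VA2 A x N) (p + N) ls (q + N) := by
  induction h with
  | nil => exact VA.PathFrom.nil _
  | cons htr _ ih =>
    exact VA.PathFrom.cons (delta2_nonx htr (hls _ (List.mem_cons_self))).2
      (ih fun l hl => hls l (List.mem_cons_of_mem _ hl))


/-! #### Projection of runs of the doubled automaton -/

lemma proj {A : VA Sig} {x N : ℕ} (hN : ∀ s ∈ statesOf A, s < N)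
    {s : ℕ} {ls : List (VLabel Sig)} {t : ℕ}
    (h : VA.PathFrom (VA2 A x N) s ls t) :
    (s < N → ∃ ls₀, VA.PathFrom A s ls₀ (if t < N then t else t - N) ∧ RelX x ls₀ ls ∧
      ((t < N ∧ ∀ l ∈ ls, ¬ xlab x l) ∨
       (N ≤ t ∧ ∃ i : ℕ, ls[i]? = some (VLabel.openv x) ∧
         (∀ k < i, ls[k]? ≠ some (VLabel.openv x) ∧ ls[k]? ≠ some (VLabel.closev x)) ∧
         (∀ k : ℕ, ls[k]? = some (VLabel.openv x) → k = i)))) ∧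
    (N ≤ s → N ≤ t ∧ ∃ ls₀, VA.PathFrom A (s - N) ls₀ (t - N) ∧ RelX x ls₀ ls ∧
      ∀ k : ℕ, ls[k]? ≠ some (VLabel.openv x)) := by
  induction h with
  | nil q =>
    constructor
    · intro hs
      refine ⟨[], ?_, List.Forall₂.nil, Or.inl ⟨hs, by simp⟩⟩
      rw [if_pos hs]
      exact VA.PathFrom.nil q
    · intro hs
      exact ⟨hs, [], VA.PathFrom.nil _, List.Forall₂.nil, by simp⟩
  | @cons p q r l ls htrans htail ih =>
    obtain ⟨p₀, l₀, q₀, horig, hcase⟩ := delta2_inv htrans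
    have hp₀ : p₀ < N := hN _ (mem_statesOf_src horig)
    have hq₀ : q₀ < N := hN _ (mem_statesOf_tgt horig)
    constructor
    · intro hs
      rcases hcase with ⟨hnx, heq | heq⟩ | ⟨hxl, heq | heq⟩
      · -- copy-0 transition
        obtain ⟨rfl, rfl, rfl⟩ : p = p₀ ∧ l = l₀ ∧ q = q₀ := by
          simpa [Prod.ext_iff] using heq
        obtain ⟨ls₀, hpath, hrel, hstruct⟩ := ih.1 hq₀
        refine ⟨l :: ls₀, VA.PathFrom.cons horig hpath,
          List.Forall₂.cons (Or.inl rfl) hrel, ?_⟩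
        rcases hstruct with ⟨htN, hnox⟩ | ⟨htN, i, hi, hbef, huniq⟩
        · refine Or.inl ⟨htN, ?_⟩
          intro l' hl'
          rcases List.mem_cons.mp hl' with rfl | hmem
          · exact hnx
          · exact hnox l' hmem
        · refine Or.inr ⟨htN, i + 1, by simpa using hi, ?_, ?_⟩
          · intro k hk
            match k with
            | 0 =>
              simp only [List.getElem?_cons_zero, ne_eq, Option.some.injEq]
              constructor
              · intro hh; exact hnx (Or.inl hh)
              · intro hh; exact hnx (Or.inr hh)
            | k + 1 =>
              simpa using hbef k (by omega)
          · intro k hk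
            match k with
            | 0 =>
              exfalso
              simp only [List.getElem?_cons_zero, Option.some.injEq] at hk
              exact hnx (Or.inl hk)
            | k + 1 =>
              have := huniq k (by simpa using hk)
              omega
      · -- copy-1 transition : impossible from s < N
        exfalso
        have : p = p₀ + N := (Prod.ext_iff.mp heq).1
        omega
      · -- crossing transition
        obtain ⟨rfl, rfl, rfl⟩ : p = p₀ ∧ l = VLabel.openv x ∧ q = q₀ + N := by
          simpa [Prod.ext_iff] using heq
        obtain ⟨htN, ls₀, hpath, hrel, hnox⟩ := ih.2 (by omega)
        have hpath' : VA.PathFrom A q₀ ls₀ (r - N) := by simpa using hpath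
        refine ⟨l₀ :: ls₀, ?_, List.Forall₂.cons (Or.inr ⟨hxl, Or.inl rfl⟩) hrel, ?_⟩
        · rw [if_neg (by omega)]
          exact VA.PathFrom.cons horig hpath'
        · refine Or.inr ⟨htN, 0, by simp, fun k hk => absurd hk (Nat.not_lt_zero k), ?_⟩
          intro k hk
          match k with
          | 0 => rfl
          | k + 1 =>
            exfalso
            exact hnox k (by simpa using hk)
      · -- copy-1 close transition : impossible from s < N
        exfalso
        have : p = p₀ + N := (Prod.ext_iff.mp heq).1
        omega
    · intro hs
      rcases hcase with ⟨hnx, heq | heq⟩ | ⟨hxl, heq | heq⟩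
      · exfalso
        have : p = p₀ := (Prod.ext_iff.mp heq).1
        omega
      · obtain ⟨rfl, rfl, rfl⟩ : p = p₀ + N ∧ l = l₀ ∧ q = q₀ + N := by
          simpa [Prod.ext_iff] using heq
        obtain ⟨htN, ls₀, hpath, hrel, hnox⟩ := ih.2 (by omega)
        have hpath' : VA.PathFrom A q₀ ls₀ (r - N) := by simpa using hpath
        refine ⟨htN, l :: ls₀, ?_, List.Forall₂.cons (Or.inl rfl) hrel, ?_⟩
        · have : p₀ + N - N = p₀ := by omega
          rw [this]
          exact VA.PathFrom.cons horig hpath'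
        · intro k
          match k with
          | 0 =>
            simp only [List.getElem?_cons_zero, ne_eq, Option.some.injEq]
            intro hh; exact hnx (Or.inl hh)
          | k + 1 => simpa using hnox k
      · exfalso
        have : p = p₀ := (Prod.ext_iff.mp heq).1
        omega
      · obtain ⟨rfl, rfl, rfl⟩ : p = p₀ + N ∧ l = VLabel.closev x ∧ q = q₀ + N := by
          simpa [Prod.ext_iff] using heq
        obtain ⟨htN, ls₀, hpath, hrel, hnox⟩ := ih.2 (by omega)
        have hpath' : VA.PathFrom A q₀ ls₀ (r - N) := by simpa using hpath
        refine ⟨htN, l₀ :: ls₀, ?_, List.Forall₂.cons (Or.inr ⟨hxl, Or.inr rfl⟩) hrel, ?_⟩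
        · have : p₀ + N - N = p₀ := by omega
          rw [this]
          exact VA.PathFrom.cons horig hpath'
        · intro k
          match k with
          | 0 => simp
          | k + 1 => simpa using hnox k


/-! #### Accepting runs of the doubled automaton -/

lemma q0_VA2 (A : VA Sig) (x N : ℕ) : (VA2 A x N).q0 = A.q0 := rfl

lemma F2_proj {A : VA Sig} {x N : ℕ} (hN : ∀ s ∈ statesOf A, s < N) {qf : ℕ}
    (h : qf ∈ (VA2 A x N).F) : (if qf < N then qf else qf - N) ∈ A.F := by
  rcases Finset.mem_union.mp h with h' | h'
  · rw [if_pos (hN _ (mem_statesOf_F h'))]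
    exact h'
  · obtain ⟨f, hf, rfl⟩ := Finset.mem_image.mp h'
    rw [if_neg (by omega)]
    simpa using hf

lemma noxlab_getElem? {x : ℕ} (L : List (VLabel Sig)) (k : ℕ) (hL : ∀ l ∈ L, ¬ xlab x l) :
    L[k]? ≠ some (VLabel.openv x) ∧ L[k]? ≠ some (VLabel.closev x) := by
  cases hLk : L[k]? with
  | none => simp
  | some a =>
    have ha := hL a (mem_of_getElem?' hLk)
    constructor <;> intro hh <;> apply ha
    · exact Or.inl (by injection hh)
    · exact Or.inr (by injection hh)

lemma accepts_proj {A : VA Sig} {x N : ℕ} (hN : ∀ s ∈ statesOf A, s < N)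
    (hseq : A.Sequential) {ls : List (VLabel Sig)}
    (h : AcceptsWith (VA2 A x N) ls) :
    ∃ ls₀, AcceptsWith A ls₀ ∧ RelX x ls₀ ls ∧ XNorm x ls := by
  obtain ⟨qf, hpath, hqf⟩ := h
  have hq0 : A.q0 < N := hN _ (mem_statesOf_q0 A)
  obtain ⟨ls₀, hpath₀, hrel, hstruct⟩ := (proj hN hpath).1 hq0
  have hacc₀ : AcceptsWith A ls₀ := ⟨_, hpath₀, F2_proj hN hqf⟩
  refine ⟨ls₀, hacc₀, hrel, ?_⟩
  rcases hstruct with ⟨_, hnox⟩ | ⟨_, i, hi, hbef, huniq⟩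
  · exact Or.inl fun k => noxlab_getElem? ls k hnox
  · right
    have hvalid₀ := hseq ls₀ hacc₀
    have hcX := relx_countX hrel
    have ho_ls : ls.count (VLabel.openv x) = 1 := count_eq_one_of hi huniq
    rcases valid_counts hvalid₀ x with ⟨h0o, h0c⟩ | ⟨h0o, h0c⟩
    · exfalso; omega
    · have hc_ls : ls.count (VLabel.closev x) = 1 := by omega
      obtain ⟨j, hj, huj⟩ := exists_unique_of_count_one hc_ls
      have hij : i ≠ j := fun hh => by rw [hh, hj] at hi; simp at hi
      have hlt : i < j := by
        rcases Nat.lt_or_ge j i with hj' | hj'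
        · exact absurd hj (hbef j hj').2
        · omega
      refine ⟨i, j, hlt, hi, hj, fun k hki hkj => ?_⟩
      exact ⟨fun hk => hki (huniq k hk), fun hk => hkj (huj k hk)⟩

lemma va2_sequential {A : VA Sig} {x N : ℕ} (hN : ∀ s ∈ statesOf A, s < N)
    (hseq : A.Sequential) : (VA2 A x N).Sequential := by
  intro ls hacc
  obtain ⟨ls₀, hacc₀, hrel, hX⟩ := accepts_proj hN hseq hacc
  exact valid_transfer hrel (hseq ls₀ hacc₀) hX

lemma va2_sem_sub {A : VA Sig} {x N : ℕ} (hN : ∀ s ∈ statesOf A, s < N)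
    (hseq : A.Sequential) (d : List Sig) : vaSem (VA2 A x N) d ⊆ vaSem A d := by
  rintro μ ⟨ls, hacc, hread, hvalid, rfl⟩
  obtain ⟨ls₀, hacc₀, hrel, hX⟩ := accepts_proj hN hseq hacc
  have hvalid₀ := hseq ls₀ hacc₀
  exact ⟨ls₀, hacc₀, (relx_readWord hrel).trans hread, hvalid₀,
    (runMapping_rel hrel hvalid₀ hvalid).symm⟩

lemma xnorm_shape {x : ℕ} (u v w : List (VLabel Sig)) (hu : ∀ l ∈ u, ¬ xlab x l)
    (hv : ∀ l ∈ v, ¬ xlab x l) (hw : ∀ l ∈ w, ¬ xlab x l) :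
    XNorm x (u ++ VLabel.openv x :: (v ++ VLabel.closev x :: w)) := by
  right
  refine ⟨u.length, u.length + 1 + v.length, by omega, ?_, ?_, ?_⟩
  · rw [List.getElem?_append_right (le_refl u.length)]
    simp
  · rw [List.getElem?_append_right (by omega : u.length ≤ u.length + 1 + v.length)]
    have : u.length + 1 + v.length - u.length = v.length + 1 := by omega
    rw [this, List.getElem?_cons_succ,
      List.getElem?_append_right (le_refl v.length)]
    simp
  · intro k hki hkj
    rcases Nat.lt_or_ge k u.length with hk | hk
    · rw [List.getElem?_append_left hk]
      exact noxlab_getElem? u k hu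
    · rw [List.getElem?_append_right hk]
      have hk1 : 1 ≤ k - u.length := by omega
      obtain ⟨k', hk'⟩ : ∃ k', k - u.length = k' + 1 := ⟨k - u.length - 1, by omega⟩
      rw [hk', List.getElem?_cons_succ]
      rcases Nat.lt_or_ge k' v.length with hkv | hkv
      · rw [List.getElem?_append_left hkv]
        exact noxlab_getElem? v k' hv
      · rw [List.getElem?_append_right hkv]
        have hk2 : 1 ≤ k' - v.length := by omega
        obtain ⟨k'', hk''⟩ : ∃ k'', k' - v.length = k'' + 1 := ⟨k' - v.length - 1, by omega⟩
        rw [hk'', List.getElem?_cons_succ]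
        exact noxlab_getElem? w k'' hw

lemma va2_sem_sup {A : VA Sig} {x N : ℕ} (hN : ∀ s ∈ statesOf A, s < N)
    (d : List Sig) : vaSem A d ⊆ vaSem (VA2 A x N) d := by
  rintro μ ⟨ls₀, ⟨qf, hpath, hqf⟩, hread, hvalid, rfl⟩
  by_cases hm : (VLabel.openv x) ∈ ls₀
  · rcases valid_counts hvalid x with ⟨h0o, _⟩ | ⟨h0o, h0c⟩
    · exact absurd (List.count_pos_iff.mpr hm) (by omega)
    obtain ⟨i0, hi0, hui0⟩ := exists_unique_of_count_one h0o
    obtain ⟨j0, hj0, huj0⟩ := exists_unique_of_count_one h0c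
    have hne : i0 ≠ j0 := fun hh => by rw [hh, hj0] at hi0; simp at hi0
    obtain ⟨a, b, hab, hga, hgb, hoth⟩ :
        ∃ a b : ℕ, a < b ∧
          (ls₀[a]? = some (VLabel.openv x) ∨ ls₀[a]? = some (VLabel.closev x)) ∧
          (ls₀[b]? = some (VLabel.openv x) ∨ ls₀[b]? = some (VLabel.closev x)) ∧
          ∀ k : ℕ, k ≠ a → k ≠ b →
            ls₀[k]? ≠ some (VLabel.openv x) ∧ ls₀[k]? ≠ some (VLabel.closev x) := by
      rcases Nat.lt_or_ge i0 j0 with hlt | hge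
      · exact ⟨i0, j0, hlt, Or.inl hi0, Or.inr hj0,
          fun k hki hkj => ⟨fun hk => hki (hui0 k hk), fun hk => hkj (huj0 k hk)⟩⟩
      · exact ⟨j0, i0, by omega, Or.inr hj0, Or.inl hi0,
          fun k hkj hki => ⟨fun hk => hki (hui0 k hk), fun hk => hkj (huj0 k hk)⟩⟩
    have hb_len : b < ls₀.length := by
      rcases hgb with h | h <;> exact (List.getElem?_eq_some_iff.mp h).1
    have ha_len : a < ls₀.length := by omega
    set u := ls₀.take a with hu_def
    set la := ls₀[a]'ha_len with hla_def
    set v := (ls₀.drop (a+1)).take (b - (a+1)) with hv_def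
    set lb := ls₀[b]'hb_len with hlb_def
    set w := ls₀.drop (b+1) with hw_def
    have hdecomp : ls₀ = u ++ la :: (v ++ lb :: w) := by
      conv_lhs => rw [← List.take_append_drop a ls₀]
      rw [hu_def]
      congr 1
      rw [List.drop_eq_getElem_cons ha_len]
      congr 1
      conv_lhs => rw [← List.take_append_drop (b - (a+1)) (ls₀.drop (a+1))]
      rw [hv_def]
      congr 1
      rw [List.drop_drop]
      have heq : a + 1 + (b - (a+1)) = b := by omega
      rw [heq, List.drop_eq_getElem_cons hb_len, hw_def]
    have hga' : ls₀[a]? = some la := List.getElem?_eq_getElem ha_len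
    have hgb' : ls₀[b]? = some lb := List.getElem?_eq_getElem hb_len
    have hxla : xlab x la := by
      rcases hga with h | h
      · exact Or.inl (by have := hga'.symm.trans h; injection this)
      · exact Or.inr (by have := hga'.symm.trans h; injection this)
    have hxlb : xlab x lb := by
      rcases hgb with h | h
      · exact Or.inl (by have := hgb'.symm.trans h; injection this)
      · exact Or.inr (by have := hgb'.symm.trans h; injection this)
    have key : ∀ (k : ℕ), k ≠ a → k ≠ b → (hk : k < ls₀.length) → ¬ xlab x (ls₀[k]'hk) := by
      intro k hka hkb hk hxl
      have hgk : ls₀[k]? = some (ls₀[k]'hk) := List.getElem?_eq_getElem hk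
      rcases hxl with hh | hh
      · exact (hoth k hka hkb).1 (by rw [hgk, hh])
      · exact (hoth k hka hkb).2 (by rw [hgk, hh])
    have hu_nox : ∀ l ∈ u, ¬ xlab x l := by
      intro l hl
      obtain ⟨k, hk, he⟩ := List.mem_iff_getElem.mp hl
      have hk' : k < a := by
        rw [hu_def, List.length_take] at hk
        omega
      have hel : ls₀[k]'(by omega) = l := by
        rw [← he]
        exact (List.getElem_take).symm
      intro hxl
      exact key k (by omega) (by omega) (by omega) (hel ▸ hxl)
    have hv_nox : ∀ l ∈ v, ¬ xlab x l := by
      intro l hl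
      obtain ⟨m, hmlt, he⟩ := List.mem_iff_getElem.mp hl
      have hm' : m < b - (a+1) := by
        rw [hv_def, List.length_take] at hmlt
        omega
      have hmd : m < (ls₀.drop (a+1)).length := by
        rw [List.length_drop]
        omega
      have hel : ls₀[a + 1 + m]'(by rw [List.length_drop] at hmd; omega) = l := by
        rw [← he]
        have h1 : v[m]'hmlt = (ls₀.drop (a+1))[m]'hmd := List.getElem_take
        have h2 : (ls₀.drop (a+1))[m]'hmd
            = ls₀[a + 1 + m]'(by rw [List.length_drop] at hmd; omega) := List.getElem_drop
        exact (h1.trans h2).symm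
      intro hxl
      exact key (a + 1 + m) (by omega) (by omega) (by rw [List.length_drop] at hmd; omega)
        (hel ▸ hxl)
    have hw_nox : ∀ l ∈ w, ¬ xlab x l := by
      intro l hl
      obtain ⟨m, hmlt, he⟩ := List.mem_iff_getElem.mp hl
      have hmd : b + 1 + m < ls₀.length := by
        rw [hw_def, List.length_drop] at hmlt
        omega
      have hel : ls₀[b + 1 + m]'hmd = l := by
        rw [← he]
        exact (List.getElem_drop).symm
      intro hxl
      exact key (b + 1 + m) (by omega) (by omega) hmd (hel ▸ hxl)
    rw [hdecomp] at hpath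
    obtain ⟨p1, hPu, hrest⟩ := pathFrom_split hpath
    cases hrest with
    | cons htra hrest2 =>
      obtain ⟨p3, hPv, hrest3⟩ := pathFrom_split hrest2
      cases hrest3 with
      | cons htrb hPw =>
        have hcross1 := (delta2_x (N := N) htra hxla).1
        have hcross2 := (delta2_x (N := N) htrb hxlb).2
        have hpath' : VA.PathFrom (VA2 A x N) A.q0
            (u ++ VLabel.openv x :: (v ++ VLabel.closev x :: w)) (qf + N) :=
          pathFrom_append (lift0 hPu hu_nox)
            (VA.PathFrom.cons hcross1
              (pathFrom_append (lift1 hPv hv_nox)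
                (VA.PathFrom.cons hcross2 (lift1 hPw hw_nox))))
        have hrel : RelX x ls₀ (u ++ VLabel.openv x :: (v ++ VLabel.closev x :: w)) := by
          rw [hdecomp]
          exact forall₂_append (RelX.refl x u)
            (List.Forall₂.cons (Or.inr ⟨hxla, Or.inl rfl⟩)
              (forall₂_append (RelX.refl x v)
                (List.Forall₂.cons (Or.inr ⟨hxlb, Or.inr rfl⟩) (RelX.refl x w))))
        have hX := xnorm_shape (x := x) u v w hu_nox hv_nox hw_nox
        have hvalid' := valid_transfer hrel hvalid hX
        refine ⟨_, ⟨qf + N, hpath', Finset.mem_union_right _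
          (Finset.mem_image.mpr ⟨qf, hqf, rfl⟩)⟩, ?_, hvalid', ?_⟩
        · rw [← relx_readWord hrel]
          exact hread
        · exact runMapping_rel hrel hvalid hvalid' 
  · have hmc : (VLabel.closev x) ∉ ls₀ := fun hc => hm ((hvalid x).2.2.1.mpr hc)
    have hnox : ∀ l ∈ ls₀, ¬ xlab x l := by
      rintro l hl (rfl | rfl)
      · exact hm hl
      · exact hmc hl
    exact ⟨ls₀, ⟨qf, lift0 hpath hnox, Finset.mem_union_left _ hqf⟩, hread, hvalid, rfl⟩


/-! #### Semi-functionality of the doubled automaton -/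

lemma va2_semifun_x {A : VA Sig} {x N : ℕ} (hN : ∀ s ∈ statesOf A, s < N) :
    SemiFunctionalFor (VA2 A x N) x := by
  rintro ⟨q, ls1, ls2, ⟨hpath1, -⟩, ⟨hpath2, -⟩, hc1, ho2⟩
  have hq0 : A.q0 < N := hN _ (mem_statesOf_q0 A)
  obtain ⟨ls₀, -, hrel1, hstruct1⟩ := (proj hN hpath1).1 hq0
  rcases hstruct1 with ⟨hqN, hnox⟩ | ⟨hqN, -⟩
  · obtain ⟨k, hk⟩ := exists_getElem?_of_mem hc1
    exact (noxlab_getElem? ls1 k hnox).2 hk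
  · obtain ⟨ls₀', -, hrel2, hstruct2⟩ := (proj hN hpath2).1 hq0
    rcases hstruct2 with ⟨hqN', -⟩ | ⟨-, i, hi, -, -⟩
    · omega
    · exact ho2 (mem_of_getElem?' hi)

lemma va2_semifun_y {A : VA Sig} {x N : ℕ} (hN : ∀ s ∈ statesOf A, s < N) {y : ℕ}
    (hyx : y ≠ x) (hsfy : SemiFunctionalFor A y) : SemiFunctionalFor (VA2 A x N) y := by
  rintro ⟨q, ls1, ls2, ⟨hpath1, ls1', qf1, hc1path, hqf1⟩,
    ⟨hpath2, ls2', qf2, hc2path, hqf2⟩, hc1, ho2⟩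
  apply hsfy
  have hq0 : A.q0 < N := hN _ (mem_statesOf_q0 A)
  obtain ⟨ls10, hpath10, hrel1, -⟩ := (proj hN hpath1).1 hq0
  obtain ⟨ls20, hpath20, hrel2, -⟩ := (proj hN hpath2).1 hq0
  have hcont : ∃ ls' qf, VA.PathFrom A (if q < N then q else q - N) ls' qf ∧ qf ∈ A.F := by
    by_cases hq : q < N
    · obtain ⟨ls1c, hpc1, -, -⟩ := (proj hN hc1path).1 hq
      rw [if_pos hq]
      exact ⟨ls1c, _, hpc1, F2_proj hN hqf1⟩
    · obtain ⟨hqfN, ls1c, hpc1, -, -⟩ := (proj hN hc1path).2 (by omega)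
      rw [if_neg hq]
      have hF := F2_proj hN hqf1
      rw [if_neg (by omega)] at hF
      exact ⟨ls1c, _, hpc1, hF⟩
  refine ⟨(if q < N then q else q - N), ls10, ls20, ⟨hpath10, hcont⟩, ⟨hpath20, hcont⟩, ?_, ?_⟩
  · exact (relx_mem_ne hyx hrel1).2.mpr hc1
  · exact fun h => ho2 ((relx_mem_ne hyx hrel2).1.mp h)

/-! #### Size bounds -/

lemma card_liftT_le (x N : ℕ) (t : ℕ × VLabel Sig × ℕ) : (liftT x N t).card ≤ 2 := by
  unfold liftT
  split_ifs <;> exact (Finset.card_insert_le _ _).trans (by simp)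

lemma delta_va2_card (A : VA Sig) (x N : ℕ) : (VA2 A x N).δ.card ≤ 2 * A.δ.card := by
  refine (Finset.card_biUnion_le).trans ?_
  calc ∑ t ∈ A.δ, (liftT x N t).card ≤ ∑ _t ∈ A.δ, 2 :=
        Finset.sum_le_sum fun t _ => card_liftT_le x N t
    _ = 2 * A.δ.card := by rw [Finset.sum_const, smul_eq_mul, mul_comm]

lemma states_va2_card (A : VA Sig) (x N : ℕ) :
    (statesOf (VA2 A x N)).card ≤ 2 * (statesOf A).card := by
  have hsub : statesOf (VA2 A x N) ⊆ statesOf A ∪ (statesOf A).image (· + N) := by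
    intro s hs
    unfold statesOf at hs
    rcases Finset.mem_insert.mp hs with rfl | hs
    · exact Finset.mem_union_left _ (mem_statesOf_q0 A)
    rcases Finset.mem_union.mp hs with hs | hs
    · rcases Finset.mem_union.mp hs with hs | hs
      · rcases Finset.mem_union.mp hs with hs | hs
        · exact Finset.mem_union_left _ (mem_statesOf_F hs)
        · obtain ⟨f, hf, rfl⟩ := Finset.mem_image.mp hs
          exact Finset.mem_union_right _
            (Finset.mem_image.mpr ⟨f, mem_statesOf_F hf, rfl⟩)
      · obtain ⟨t, ht, rfl⟩ := Finset.mem_image.mp hs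
        obtain ⟨p, l, q, horig, hcase⟩ := delta2_inv ht
        rcases hcase with ⟨-, h | h⟩ | ⟨-, h | h⟩ <;> rw [h] <;>
          first
          | exact Finset.mem_union_left _ (mem_statesOf_src horig)
          | exact Finset.mem_union_right _
              (Finset.mem_image.mpr ⟨p, mem_statesOf_src horig, rfl⟩)
    · obtain ⟨t, ht, rfl⟩ := Finset.mem_image.mp hs
      obtain ⟨p, l, q, horig, hcase⟩ := delta2_inv ht
      rcases hcase with ⟨-, h | h⟩ | ⟨-, h | h⟩ <;> rw [h] <;>
        first
        | exact Finset.mem_union_left _ (mem_statesOf_tgt horig)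
        | exact Finset.mem_union_right _
            (Finset.mem_image.mpr ⟨q, mem_statesOf_tgt horig, rfl⟩)
  refine (Finset.card_le_card hsub).trans ?_
  refine (Finset.card_union_le _ _).trans ?_
  have := Finset.card_image_le (s := statesOf A) (f := (· + N))
  omega


end Aux

theorem statement2 (A : VA Sig) (Y : Finset ℕ) (x : ℕ)
    (hseq : A.Sequential) (hY : Y ⊆ varsOf A) (hsf : SemiFunctionalForSet A Y)
    (hx : x ∈ varsOf A) (hxY : x ∉ Y) :
    ∃ A' : VA Sig, A'.Sequential ∧ (∀ d : List Sig, vaSem A' d = vaSem A d) ∧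
      SemiFunctionalForSet A' (insert x Y) ∧
      (statesOf A').card ≤ 2 * (statesOf A).card ∧ A'.δ.card ≤ 2 * A.δ.card := by
  classical
  set N := (statesOf A).sup id + 1 with hNdef
  have hN : ∀ s ∈ statesOf A, s < N := by
    intro s hs
    have := Finset.le_sup (f := id) hs
    simp only [id] at this
    omega
  refine ⟨VA2 A x N, va2_sequential hN hseq, ?_, ?_, states_va2_card A x N,
    delta_va2_card A x N⟩
  · intro d
    exact Set.Subset.antisymm (va2_sem_sub hN hseq d) (va2_sem_sup hN d)
  · intro y hy
    rcases Finset.mem_insert.mp hy with rfl | hy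
    · exact va2_semifun_x hN
    · exact va2_semifun_y hN (fun h => hxY (h ▸ hy)) (hsf y hy)

end Spanners
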